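/- Let Q = Q₁ × ⋯ × Qₙ be a product probability measure on a product X = ∏ᵢ Xᵢ of Polish spaces and let P be a probability measure on X. For coefficients c_S ≥ 0 indexed by subsets S ⊆ [n] with Σ_{S ∋ i} c_S ≤ 1 for every i, one has Σ_{S ⊆ [n]} c_S · D(P_S ‖ Q_S) ≤ D(P ‖ Q), where P_S, Q_S denote the marginals on ∏_{i∈S} Xᵢ. -/

import Mathlib

open MeasureTheory ENNReal Real

noncomputable section

open Classical in
/-- Relative entropy (Kullback–Leibler divergence) `D(P‖Q)`, valued in `[0,∞]`. -/
def KLdiv {α : Type*} [MeasurableSpace α] (P Q : Measure α) : ℝ≥0∞ :=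
  if P ≪ Q ∧ Integrable (llr P Q) P then ENNReal.ofReal (∫ x, llr P Q x ∂P) else ⊤

/-- Marginal of a measure on a product on the coordinates in `S`. -/
def marginal {n : ℕ} {X : Fin n → Type*} [∀ i, MeasurableSpace (X i)]
    (P : Measure (∀ i, X i)) (S : Finset (Fin n)) : Measure (∀ i : S, X i) :=
  Measure.map (fun x (i : S) => x i) P

end

section Aux

variable {α : Type*} [MeasurableSpace α] {ν ρ : Measure α}

/-- Change of measure for lintegrals under absolute continuity. -/
lemma aux_change [SigmaFinite ν] [SigmaFinite ρ] (hac : ν ≪ ρ) {f : α → ℝ≥0∞} (hf : Measurable f) :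
    ∫⁻ y, f y ∂ν = ∫⁻ y, ν.rnDeriv ρ y * f y ∂ρ := by
  nth_rewrite 1 [← Measure.withDensity_rnDeriv_eq ν ρ hac]
  rw [lintegral_withDensity_eq_lintegral_mul ρ (Measure.measurable_rnDeriv ν ρ) hf]
  rfl

lemma aux_lintegral_neg_llr_le [SigmaFinite ν] [IsProbabilityMeasure ρ] (hac : ν ≪ ρ) :
    ∫⁻ y, ENNReal.ofReal (-(llr ν ρ y)) ∂ν ≤ 1 := by
  rw [aux_change hac (by measurability)]
  calc ∫⁻ y, ν.rnDeriv ρ y * ENNReal.ofReal (-(llr ν ρ y)) ∂ρ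
      ≤ ∫⁻ _, 1 ∂ρ := by
        refine lintegral_mono fun y => ?_
        by_cases hfin : ν.rnDeriv ρ y = ∞
        · simp [llr, hfin]
        · set t := (ν.rnDeriv ρ y).toReal with ht
          have ht0 : 0 ≤ t := ENNReal.toReal_nonneg
          have hrw : ν.rnDeriv ρ y = ENNReal.ofReal t := (ENNReal.ofReal_toReal hfin).symm
          rw [hrw, llr, ← ht, ← ENNReal.ofReal_mul ht0, ← ENNReal.ofReal_one]
          apply ENNReal.ofReal_le_ofReal
          rcases eq_or_lt_of_le ht0 with h0 | h0
          · simp [← h0]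
          · have := Real.log_le_sub_one_of_pos (inv_pos.mpr h0)
            rw [Real.log_inv] at this
            have h2 := mul_le_mul_of_nonneg_left this h0.le
            rw [mul_sub, mul_inv_cancel₀ h0.ne'] at h2
            nlinarith
    _ = 1 := by simp

lemma aux_integrable_neg_part [SigmaFinite ν] [IsProbabilityMeasure ρ] (hac : ν ≪ ρ) :
    Integrable (fun y => max (-(llr ν ρ y)) 0) ν := by
  refine ⟨((measurable_llr ν ρ).neg.max measurable_const).aestronglyMeasurable,
    (hasFiniteIntegral_iff_ofReal (f := fun y => max (-(llr ν ρ y)) 0)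
      (ae_of_all _ fun y => le_max_right _ _)).mpr ?_⟩
  have : ∀ y, ENNReal.ofReal (max (-(llr ν ρ y)) 0) = ENNReal.ofReal (-(llr ν ρ y)) := by
    intro y
    rcases le_total (-(llr ν ρ y)) 0 with h | h
    · rw [max_eq_right h, ENNReal.ofReal_zero, ENNReal.ofReal_of_nonpos h]
    · rw [max_eq_left h]
  simp_rw [this]
  exact lt_of_le_of_lt (aux_lintegral_neg_llr_le hac) ENNReal.one_lt_top

lemma aux_integrable_min [IsProbabilityMeasure ν] [IsProbabilityMeasure ρ] (hac : ν ≪ ρ)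
    (M : ℝ) (hM : 0 ≤ M) : Integrable (fun y => min (llr ν ρ y) M) ν := by
  have hneg := aux_integrable_neg_part hac
  refine Integrable.mono ((hneg.add (integrable_const M)) : Integrable (fun y => max (-(llr ν ρ y)) 0 + M) ν)
    ((measurable_llr ν ρ).min measurable_const).aestronglyMeasurable (ae_of_all _ fun y => ?_)
  have key : |min (llr ν ρ y) M| ≤ max (-(llr ν ρ y)) 0 + M := by
    rcases le_total (llr ν ρ y) M with h | h
    · rw [min_eq_left h]
      rcases le_total (llr ν ρ y) 0 with h2 | h2
      · rw [abs_of_nonpos h2, max_eq_left (by linarith)]; linarith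
      · rw [abs_of_nonneg h2]; have := le_max_right (-(llr ν ρ y)) 0; linarith
    · rw [min_eq_right h, abs_of_nonneg hM]
      have := le_max_right (-(llr ν ρ y)) 0; linarith
  rw [Real.norm_eq_abs, Real.norm_eq_abs]
  exact key.trans (le_abs_self _)

/-- The core Gibbs-type bound. -/
lemma aux_core [IsProbabilityMeasure ν] [IsProbabilityMeasure ρ] (hac : ν ≪ ρ)
    (hint : Integrable (llr ν ρ) ν) {f : α → ℝ} (hfm : Measurable f) (hfi : Integrable f ν)
    (hbound : ∫⁻ y, ν.rnDeriv ρ y * ENNReal.ofReal (Real.exp (f y - llr ν ρ y)) ∂ρ ≤ 1) :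
    ∫ y, f y ∂ν ≤ ∫ y, llr ν ρ y ∂ν := by
  set ψ := fun y => Real.exp (f y - llr ν ρ y) with hψ
  have hψm : Measurable ψ := (hfm.sub (measurable_llr _ _)).exp
  have key : ∫⁻ y, ENNReal.ofReal (ψ y) ∂ν ≤ 1 := by
    rw [aux_change hac hψm.ennreal_ofReal]; exact hbound
  have hψi : Integrable ψ ν := by
    refine ⟨hψm.aestronglyMeasurable, ?_⟩
    rw [hasFiniteIntegral_iff_ofReal (f := ψ) (ae_of_all _ fun y => (Real.exp_pos _).le)]
    exact lt_of_le_of_lt key ENNReal.one_lt_top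
  have hψle : ∫ y, ψ y ∂ν ≤ 1 := by
    rw [integral_eq_lintegral_of_nonneg_ae (ae_of_all _ fun y => (Real.exp_pos _).le)
      hψm.aestronglyMeasurable]
    calc (∫⁻ y, ENNReal.ofReal (ψ y) ∂ν).toReal ≤ (1 : ℝ≥0∞).toReal :=
          ENNReal.toReal_mono ENNReal.one_ne_top key
      _ = 1 := by simp
  have h2 : ∫ y, (f y - llr ν ρ y) ∂ν ≤ ∫ y, (ψ y - 1) ∂ν := by
    refine integral_mono (hfi.sub hint) (hψi.sub (integrable_const 1)) fun y => ?_
    have := Real.add_one_le_exp (f y - llr ν ρ y)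
    simp only [hψ]; linarith
  rw [integral_sub hfi hint, integral_sub hψi (integrable_const 1), integral_const] at h2
  simp only [probReal_univ, ENNReal.toReal_one, smul_eq_mul, one_mul, mul_one] at h2
  linarith

lemma aux_integral_llr_nonneg [IsProbabilityMeasure ν] [IsProbabilityMeasure ρ] (hac : ν ≪ ρ)
    (hint : Integrable (llr ν ρ) ν) : 0 ≤ ∫ y, llr ν ρ y ∂ν := by
  have h := aux_core hac hint measurable_const (integrable_const 0) ?_
  · simpa using h
  · calc ∫⁻ y, ν.rnDeriv ρ y * ENNReal.ofReal (Real.exp ((0:ℝ) - llr ν ρ y)) ∂ρ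
        ≤ ∫⁻ _, 1 ∂ρ := by
          refine lintegral_mono_ae ?_
          filter_upwards [Measure.rnDeriv_lt_top ν ρ] with y hfin
          by_cases h0 : ν.rnDeriv ρ y = 0
          · simp [h0]
          · have ht0 : 0 < (ν.rnDeriv ρ y).toReal := ENNReal.toReal_pos h0 hfin.ne
            rw [llr, zero_sub, Real.exp_neg, Real.exp_log ht0]
            nth_rewrite 1 [← ENNReal.ofReal_toReal hfin.ne]
            rw [← ENNReal.ofReal_mul ENNReal.toReal_nonneg, mul_inv_cancel₀ ht0.ne',
              ENNReal.ofReal_one]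
      _ = 1 := by simp

lemma aux_integrable_llr_of_bound [IsProbabilityMeasure ν] [IsProbabilityMeasure ρ]
    (hac : ν ≪ ρ) {K : ℝ} (h : ∀ M : ℕ, ∫ y, min (llr ν ρ y) (M : ℝ) ∂ν ≤ K) :
    Integrable (llr ν ρ) ν := by
  set ℓ := llr ν ρ with hℓ
  have hm : Measurable ℓ := measurable_llr _ _
  have hneg : Integrable (fun y => max (-ℓ y) 0) ν := aux_integrable_neg_part hac
  have hBm : ∀ M : ℕ, Integrable (fun y => min (ℓ y) (M : ℝ)) ν := fun M =>
    aux_integrable_min hac _ (Nat.cast_nonneg M)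
  have hfin : ∫⁻ y, ENNReal.ofReal (max (ℓ y) 0) ∂ν < ∞ := by
    have heq : ∀ y, ENNReal.ofReal (max (ℓ y) 0)
        = ⨆ M : ℕ, ENNReal.ofReal (min (ℓ y) (M : ℝ) + max (-ℓ y) 0) := by
      intro y
      have hab : ℓ y + max (-ℓ y) 0 = max (ℓ y) 0 := by
        rcases le_total (ℓ y) 0 with h2 | h2
        · rw [max_eq_left (by linarith), max_eq_right h2]; ring
        · rw [max_eq_right (by linarith), max_eq_left h2]; ring
      refine le_antisymm ?_ (iSup_le fun M => ENNReal.ofReal_le_ofReal (by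
        have : min (ℓ y) (M : ℝ) ≤ ℓ y := min_le_left _ _
        linarith))
      refine le_iSup_of_le ⌈ℓ y⌉₊ (le_of_eq ?_)
      rw [min_eq_left (Nat.le_ceil _), hab]
    calc ∫⁻ y, ENNReal.ofReal (max (ℓ y) 0) ∂ν
        = ⨆ M : ℕ, ∫⁻ y, ENNReal.ofReal (min (ℓ y) (M : ℝ) + max (-ℓ y) 0) ∂ν := by
          simp_rw [heq]
          refine lintegral_iSup (fun M => ?_) (fun M N hMN y => ?_)
          · exact ((hm.min measurable_const).add (hm.neg.max measurable_const)).ennreal_ofReal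
          · exact ENNReal.ofReal_le_ofReal (by
              have : min (ℓ y) (M : ℝ) ≤ min (ℓ y) (N : ℝ) :=
                min_le_min le_rfl (Nat.cast_le.mpr hMN)
              linarith)
      _ ≤ ENNReal.ofReal (K + ∫ y, max (-ℓ y) 0 ∂ν) := by
          refine iSup_le fun M => ?_
          have hint2 : Integrable (fun y => min (ℓ y) (M : ℝ) + max (-ℓ y) 0) ν := by
            exact (hBm M).add hneg
          have hnn : ∀ y, 0 ≤ min (ℓ y) (M : ℝ) + max (-ℓ y) 0 := by
            intro y
            have h1 : (0:ℝ) ≤ max (-ℓ y) 0 := le_max_right _ _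
            rcases le_total (ℓ y) 0 with h3 | h3
            · rw [min_eq_left (le_trans h3 (Nat.cast_nonneg M)), max_eq_left (by linarith)]
              linarith
            · have h4 : (0:ℝ) ≤ min (ℓ y) (M:ℝ) := le_min h3 (Nat.cast_nonneg M); linarith
          rw [← ofReal_integral_eq_lintegral_ofReal hint2 (ae_of_all _ hnn)]
          refine ENNReal.ofReal_le_ofReal ?_
          rw [integral_add (hBm M) hneg]
          exact add_le_add_left (h M) _
      _ < ∞ := ENNReal.ofReal_lt_top
  have hpos : Integrable (fun y => max (ℓ y) 0) ν :=
    ⟨(hm.max measurable_const).aestronglyMeasurable,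
      (hasFiniteIntegral_iff_ofReal (f := fun y => max (ℓ y) 0)
      (ae_of_all _ fun y => le_max_right _ _)).mpr hfin⟩
  have : ℓ = fun y => max (ℓ y) 0 - max (-ℓ y) 0 :=
    funext fun y => (max_zero_sub_max_neg_zero_eq_self (ℓ y)).symm
  rw [hℓ] at this ⊢
  rw [show llr ν ρ = fun y => llr ν ρ y from rfl, this]
  exact hpos.sub hneg

end Aux


section Holder

lemma holder_le_one {α ι : Type*} [MeasurableSpace α] {μ : Measure α} [IsProbabilityMeasure μ]
    (s : Finset ι) {f : ι → α → ℝ≥0∞} (hf : ∀ i ∈ s, Measurable (f i))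
    {p : ι → ℝ} (h2p : ∀ i ∈ s, 0 ≤ p i) (hp : ∑ i ∈ s, p i ≤ 1) :
    ∫⁻ a, ∏ i ∈ s, f i a ^ p i ∂μ ≤ ∏ i ∈ s, (∫⁻ a, f i a ∂μ) ^ p i := by
  classical
  set g : Option ι → α → ℝ≥0∞ := fun o => o.elim (fun _ => 1) f with hg
  set q : Option ι → ℝ := fun o => o.elim (1 - ∑ i ∈ s, p i) p with hq
  have hinj : ∀ a ∈ s, ∀ b ∈ s, some a = some b → a = b :=
    fun a _ b _ h => Option.some_injective _ h
  have hnone : (none : Option ι) ∉ s.image some := by simp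
  have hsum : ∑ o ∈ insert none (s.image some), q o = 1 := by
    rw [Finset.sum_insert hnone, Finset.sum_image hinj]
    simp [hq]
  have key := ENNReal.lintegral_prod_norm_pow_le (μ := μ) (insert none (s.image some))
    (f := g) (p := q) ?_ hsum ?_
  · have hL : ∫⁻ a, ∏ o ∈ insert none (s.image some), g o a ^ q o ∂μ
        = ∫⁻ a, ∏ i ∈ s, f i a ^ p i ∂μ := by
      congr 1; funext a
      rw [Finset.prod_insert hnone, Finset.prod_image hinj]
      simp [hg, hq]
    have hR : ∏ o ∈ insert none (s.image some), (∫⁻ a, g o a ∂μ) ^ q o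
        = ∏ i ∈ s, (∫⁻ a, f i a ∂μ) ^ p i := by
      rw [Finset.prod_insert hnone, Finset.prod_image hinj]
      simp [hg, hq]
    rwa [hL, hR] at key
  · rintro (_ | i) ho
    · exact aemeasurable_const
    · exact (hf i (by simpa using ho)).aemeasurable
  · rintro (_ | i) ho
    · simpa [hq] using hp
    · exact h2p i (by simpa using ho)

end Holder

section Finner

variable {n : ℕ} {X : Fin n → Type*} [∀ i, MeasurableSpace (X i)]

lemma finner_inequality (Q : ∀ i, Measure (X i)) [∀ i, IsProbabilityMeasure (Q i)]
    (F : Finset (Fin n) → (∀ i, X i) → ℝ≥0∞) (hFm : ∀ S, Measurable (F S))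
    (hFdep : ∀ (S : Finset (Fin n)) (x y : ∀ i, X i), (∀ i ∈ S, x i = y i) → F S x = F S y)
    (c : Finset (Fin n) → ℝ) (hc : ∀ S, 0 ≤ c S)
    (hci : ∀ i : Fin n,
      ∑ S ∈ Finset.univ.filter (fun S : Finset (Fin n) => i ∈ S), c S ≤ 1) :
    ∫⁻ x, ∏ S : Finset (Fin n), F S x ^ c S ∂(Measure.pi Q)
      ≤ ∏ S : Finset (Fin n), (∫⁻ x, F S x ∂(Measure.pi Q)) ^ c S := by
  classical
  haveI : ∀ i, Nonempty (X i) := fun i => (Q i).nonempty_of_neZero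
  obtain ⟨x₀⟩ : Nonempty (∀ i, X i) := ⟨fun i => Classical.arbitrary _⟩
  have hprodm : Measurable fun x => ∏ S : Finset (Fin n), F S x ^ c S :=
    Finset.measurable_prod _ fun S _ => (hFm S).pow_const _
  have key : ∀ T : Finset (Fin n), ∀ x : ∀ i, X i,
      (∫⋯∫⁻_T, (fun x => ∏ S : Finset (Fin n), F S x ^ c S) ∂Q) x
        ≤ ∏ S : Finset (Fin n), ((∫⋯∫⁻_(T ∩ S), F S ∂Q) x) ^ c S := by
    intro T
    induction T using Finset.induction_on with
    | empty => intro x; simp [Finset.empty_inter]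
    | @insert i T hi ih =>
      intro x
      rw [lmarginal_insert _ hprodm hi]
      have hGm : ∀ S : Finset (Fin n), Measurable (∫⋯∫⁻_(T ∩ S), F S ∂Q) :=
        fun S => (hFm S).lmarginal Q
      have hGupd : ∀ S : Finset (Fin n), i ∉ S → ∀ xi,
          (∫⋯∫⁻_(T ∩ S), F S ∂Q) (Function.update x i xi)
            = (∫⋯∫⁻_(T ∩ S), F S ∂Q) x := by
        intro S hiS xi
        rw [lmarginal_update_of_notMem (hFm S)
          (fun hmem => hiS (Finset.mem_of_mem_inter_right hmem))]
        have heq : F S ∘ (Function.update · i xi) = F S := by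
          funext z
          refine hFdep S _ _ fun j hj => Function.update_of_ne ?_ _ _
          exact fun h : j = i => hiS (h ▸ hj)
        rw [heq]
      set A : Finset (Finset (Fin n)) := Finset.univ.filter (fun S => i ∈ S) with hA
      have hmemA : ∀ S : Finset (Fin n), S ∈ A ↔ i ∈ S := by
        intro S; simp [hA]
      calc ∫⁻ xi, (∫⋯∫⁻_T, (fun x => ∏ S : Finset (Fin n), F S x ^ c S) ∂Q)
              (Function.update x i xi) ∂Q i
          ≤ ∫⁻ xi, ∏ S : Finset (Fin n),
              ((∫⋯∫⁻_(T ∩ S), F S ∂Q) (Function.update x i xi)) ^ c S ∂Q i :=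
            lintegral_mono fun xi => ih _
        _ = ∫⁻ xi, (∏ S ∈ Aᶜ, ((∫⋯∫⁻_(T ∩ S), F S ∂Q) x) ^ c S)
              * ∏ S ∈ A, ((∫⋯∫⁻_(T ∩ S), F S ∂Q) (Function.update x i xi)) ^ c S ∂Q i := by
            congr 1; funext xi
            rw [mul_comm, ← Finset.prod_mul_prod_compl A]
            congr 1
            refine Finset.prod_congr rfl fun S hS => ?_
            have hiS : i ∉ S := by
              have := (Finset.mem_compl.mp hS); rw [hmemA] at this; exact this
            rw [hGupd S hiS xi]
        _ = (∏ S ∈ Aᶜ, ((∫⋯∫⁻_(T ∩ S), F S ∂Q) x) ^ c S)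
              * ∫⁻ xi, ∏ S ∈ A, ((∫⋯∫⁻_(T ∩ S), F S ∂Q) (Function.update x i xi)) ^ c S ∂Q i := by
            exact lintegral_const_mul _ (by
              exact Finset.measurable_prod _ fun S _ =>
                (((hGm S).comp (measurable_update x)).pow_const _) :
              Measurable fun xi => ∏ S ∈ A,
                ((∫⋯∫⁻_(T ∩ S), F S ∂Q) (Function.update x i xi)) ^ c S)
        _ ≤ (∏ S ∈ Aᶜ, ((∫⋯∫⁻_(T ∩ S), F S ∂Q) x) ^ c S)
              * ∏ S ∈ A, (∫⁻ xi, (∫⋯∫⁻_(T ∩ S), F S ∂Q) (Function.update x i xi) ∂Q i) ^ c S := by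
            refine mul_le_mul_right ?_ _
            refine holder_le_one A (fun S _ => (hGm S).comp (measurable_update x))
              (fun S _ => hc S) ?_
            simpa [hA] using hci i
        _ = (∏ S ∈ Aᶜ, ((∫⋯∫⁻_((insert i T) ∩ S), F S ∂Q) x) ^ c S)
              * ∏ S ∈ A, ((∫⋯∫⁻_((insert i T) ∩ S), F S ∂Q) x) ^ c S := by
            congr 1
            · refine Finset.prod_congr rfl fun S hS => ?_
              have hiS : i ∉ S := by
                have := (Finset.mem_compl.mp hS); rw [hmemA] at this; exact this
              rw [Finset.insert_inter_of_notMem hiS]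
            · refine Finset.prod_congr rfl fun S hS => ?_
              have hiS : i ∈ S := (hmemA S).mp hS
              rw [Finset.insert_inter_of_mem hiS,
                ← lmarginal_insert _ (hFm S)
                  (fun hmem => hi (Finset.mem_of_mem_inter_left hmem))]
        _ = ∏ S : Finset (Fin n), ((∫⋯∫⁻_((insert i T) ∩ S), F S ∂Q) x) ^ c S := by
            rw [mul_comm, Finset.prod_mul_prod_compl A]
  have hSmarg : ∀ S : Finset (Fin n),
      ∫⁻ x, F S x ∂(Measure.pi Q) = (∫⋯∫⁻_S, F S ∂Q) x₀ := by
    intro S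
    have hconst : ∀ z y, F S (Function.updateFinset z S y) = F S (Function.updateFinset x₀ S y) := by
      intro z y
      refine hFdep S _ _ fun j hj => ?_
      simp [Function.updateFinset, hj]
    have hc2 : ∀ z, (∫⋯∫⁻_S, F S ∂Q) z = (∫⋯∫⁻_S, F S ∂Q) x₀ := by
      intro z
      simp only [lmarginal]
      exact lintegral_congr fun y => hconst z y
    have hu : Sᶜ ∪ S = (Finset.univ : Finset (Fin n)) := by
      rw [Finset.union_comm]; exact Finset.union_compl S
    calc ∫⁻ x, F S x ∂(Measure.pi Q) = (∫⋯∫⁻_Finset.univ, F S ∂Q) x₀ :=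
          lintegral_eq_lmarginal_univ x₀
      _ = (∫⋯∫⁻_Sᶜ, (∫⋯∫⁻_S, F S ∂Q) ∂Q) x₀ := by
          rw [← hu, lmarginal_union Q (F S) (hFm S) disjoint_compl_left]
      _ = (∫⋯∫⁻_S, F S ∂Q) x₀ := by
          simp only [lmarginal]
          have h1 : (∫⁻ (a : ∀ i : (Sᶜ : Finset (Fin n)), X i),
              ∫⁻ (y : ∀ i : S, X i),
                F S (Function.updateFinset (Function.updateFinset x₀ Sᶜ a) S y)
                ∂(Measure.pi fun i : S => Q i) ∂(Measure.pi fun i : (Sᶜ : Finset (Fin n)) => Q i))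
              = ∫⁻ (a : ∀ i : (Sᶜ : Finset (Fin n)), X i),
                (∫⁻ (y : ∀ i : S, X i), F S (Function.updateFinset x₀ S y)
                  ∂(Measure.pi fun i : S => Q i))
                ∂(Measure.pi fun i : (Sᶜ : Finset (Fin n)) => Q i) :=
            lintegral_congr fun a => lintegral_congr fun y => hconst _ y
          rw [h1, lintegral_const, measure_univ, mul_one]
  calc ∫⁻ x, ∏ S : Finset (Fin n), F S x ^ c S ∂(Measure.pi Q)
      = (∫⋯∫⁻_Finset.univ, (fun x => ∏ S : Finset (Fin n), F S x ^ c S) ∂Q) x₀ :=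
        lintegral_eq_lmarginal_univ x₀
    _ ≤ ∏ S : Finset (Fin n), ((∫⋯∫⁻_(Finset.univ ∩ S), F S ∂Q) x₀) ^ c S := key _ _
    _ = ∏ S : Finset (Fin n), (∫⁻ x, F S x ∂(Measure.pi Q)) ^ c S := by
        refine Finset.prod_congr rfl fun S _ => ?_
        rw [Finset.univ_inter, ← hSmarg S]

end Finner

section Gibbs

variable {n : ℕ} {X : Fin n → Type*} [∀ i, MeasurableSpace (X i)]

lemma measurable_proj' (S : Finset (Fin n)) :
    Measurable (fun (x : ∀ i, X i) (i : S) => x i) :=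
  measurable_pi_lambda _ fun i => measurable_pi_apply _

instance marginal_isProb (P : Measure (∀ i, X i)) [IsProbabilityMeasure P] (S : Finset (Fin n)) :
    IsProbabilityMeasure (marginal P S) :=
  Measure.isProbabilityMeasure_map (measurable_proj' S).aemeasurable

lemma gibbs_bound (Q : ∀ i, Measure (X i)) [∀ i, IsProbabilityMeasure (Q i)]
    (P : Measure (∀ i, X i)) [IsProbabilityMeasure P]
    (hac : P ≪ Measure.pi Q) (hint : Integrable (llr P (Measure.pi Q)) P)
    (c : Finset (Fin n) → ℝ) (hc : ∀ S, 0 ≤ c S)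
    (hci : ∀ i : Fin n,
      ∑ S ∈ Finset.univ.filter (fun S : Finset (Fin n) => i ∈ S), c S ≤ 1)
    (φ : ∀ S : Finset (Fin n), (∀ i : S, X i) → ℝ)
    (hφm : ∀ S, Measurable (φ S))
    (hφi : ∀ S, c S ≠ 0 → Integrable (φ S) (marginal P S))
    (hφle : ∀ S, c S ≠ 0 →
      ∀ y, φ S y ≤ llr (marginal P S) (marginal (Measure.pi Q) S) y) :
    ∑ S ∈ Finset.univ.filter (fun S : Finset (Fin n) => c S ≠ 0),
        c S * ∫ y, φ S y ∂(marginal P S)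
      ≤ ∫ x, llr P (Measure.pi Q) x ∂P := by
  classical
  set μ := Measure.pi Q with hμdef
  set 𝒮 := Finset.univ.filter (fun S : Finset (Fin n) => c S ≠ 0) with h𝒮
  have h𝒮mem : ∀ S : Finset (Fin n), S ∈ 𝒮 ↔ c S ≠ 0 := fun S => by simp [h𝒮]
  have hπ : ∀ S : Finset (Fin n), Measurable (fun (x : ∀ i, X i) (i : S) => x i) :=
    fun S => measurable_proj' S
  have hacS : ∀ S : Finset (Fin n), marginal P S ≪ marginal μ S := fun S => hac.map (hπ S)
  set f : (∀ i, X i) → ℝ := fun x => ∑ S ∈ 𝒮, c S * φ S (fun i : S => x i) with hf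
  have hφiP : ∀ S ∈ 𝒮, Integrable (fun x : ∀ i, X i => φ S (fun i : S => x i)) P := by
    intro S hS
    exact (hφi S ((h𝒮mem S).mp hS)).comp_aemeasurable (hπ S).aemeasurable
  have hfm : Measurable f :=
    Finset.measurable_sum _ fun S _ => ((hφm S).comp (hπ S)).const_mul _
  have hfi : Integrable f P :=
    integrable_finset_sum _ fun S hS => ((hφiP S hS).const_mul _)
  have hsumf : ∫ x, f x ∂P = ∑ S ∈ 𝒮, c S * ∫ y, φ S y ∂(marginal P S) := by
    rw [hf, integral_finset_sum _ fun S hS => (hφiP S hS).const_mul _]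
    refine Finset.sum_congr rfl fun S hS => ?_
    have h8 := integral_smul (μ := P) (c S) (fun x : ∀ i, X i => φ S (fun i : S => x i))
    simp only [smul_eq_mul] at h8
    rw [h8]
    congr 1
    exact (integral_map (hπ S).aemeasurable (hφm S).aestronglyMeasurable).symm
  -- densities
  set F : Finset (Fin n) → (∀ i, X i) → ℝ≥0∞ :=
    fun S x => (marginal P S).rnDeriv (marginal μ S) (fun i : S => x i) with hF
  have hFm : ∀ S, Measurable (F S) :=
    fun S => (Measure.measurable_rnDeriv _ _).comp (hπ S)
  have hgfin : ∀ᵐ x ∂μ, P.rnDeriv μ x < ⊤ := Measure.rnDeriv_lt_top P μ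
  have hFfin : ∀ᵐ x ∂μ, ∀ S ∈ 𝒮, F S x < ⊤ := by
    rw [Filter.eventually_all_finset]
    intro S hS
    exact ae_of_ae_map (hπ S).aemeasurable
      (Measure.rnDeriv_lt_top (marginal P S) (marginal μ S))
  have hFpos : ∀ᵐ x ∂μ, ∀ S ∈ 𝒮, P.rnDeriv μ x ≠ 0 → F S x ≠ 0 := by
    rw [Filter.eventually_all_finset]
    intro S hS
    have hmeas' : MeasurableSet {y : ∀ i : S, X i |
        (marginal P S).rnDeriv (marginal μ S) y = 0} :=
      (Measure.measurable_rnDeriv _ _) (measurableSet_singleton 0)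
    have hAmeas : MeasurableSet {x : ∀ i, X i | F S x = 0} := (hFm S) (measurableSet_singleton 0)
    have h1 : marginal P S {y | (marginal P S).rnDeriv (marginal μ S) y = 0} = 0 := by
      rw [← Measure.setLIntegral_rnDeriv' (hacS S) hmeas',
        setLIntegral_congr_fun hmeas' (fun y hy => hy)]
      simp
    have hP0 : P {x : ∀ i, X i | F S x = 0} = 0 := by
      have h2 : marginal P S {y | (marginal P S).rnDeriv (marginal μ S) y = 0}
          = P {x : ∀ i, X i | F S x = 0} := Measure.map_apply (hπ S) hmeas'
      rw [← h2, h1]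
    have h3 : ∫⁻ x in {x : ∀ i, X i | F S x = 0}, P.rnDeriv μ x ∂μ = 0 := by
      rw [Measure.setLIntegral_rnDeriv' hac hAmeas]
      exact hP0
    have h4 : ∀ᵐ x ∂(μ.restrict {x : ∀ i, X i | F S x = 0}), P.rnDeriv μ x = 0 :=
      (lintegral_eq_zero_iff (Measure.measurable_rnDeriv P μ)).mp h3
    have h5 : ∀ᵐ x ∂μ, x ∈ {x : ∀ i, X i | F S x = 0} → P.rnDeriv μ x = 0 :=
      (ae_restrict_iff' hAmeas).mp h4
    filter_upwards [h5] with x hx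
    exact fun hg hF0 => hg (hx hF0)
  -- pointwise bound
  have hbound1 : ∀ᵐ x ∂μ, P.rnDeriv μ x * ENNReal.ofReal (Real.exp (f x - llr P μ x))
      ≤ ∏ S : Finset (Fin n), F S x ^ c S := by
    filter_upwards [hgfin, hFfin, hFpos] with x hxfin hxFfin hxFpos
    by_cases hg0 : P.rnDeriv μ x = 0
    · simp [hg0]
    · have ht : 0 < (P.rnDeriv μ x).toReal := ENNReal.toReal_pos hg0 hxfin.ne
      have hstep1 : P.rnDeriv μ x * ENNReal.ofReal (Real.exp (f x - llr P μ x))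
          = ENNReal.ofReal (Real.exp (f x)) := by
        simp only [llr]
        rw [Real.exp_sub, Real.exp_log ht]
        nth_rewrite 1 [← ENNReal.ofReal_toReal hxfin.ne]
        rw [← ENNReal.ofReal_mul ENNReal.toReal_nonneg, mul_comm ((P.rnDeriv μ x).toReal),
          div_mul_cancel₀ _ ht.ne']
      rw [hstep1]
      have hprod : Real.exp (f x) ≤ ∏ S ∈ 𝒮, ((F S x).toReal) ^ (c S) := by
        rw [hf, Real.exp_sum]
        refine Finset.prod_le_prod (fun S _ => (Real.exp_pos _).le) (fun S hS => ?_)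
        have htS : 0 < (F S x).toReal :=
          ENNReal.toReal_pos (hxFpos S hS hg0) (hxFfin S hS).ne
        have hle : φ S (fun i : S => x i) ≤ Real.log (F S x).toReal := by
          have h6 := hφle S ((h𝒮mem S).mp hS) (fun i : S => x i)
          simpa only [llr, hF] using h6
        calc Real.exp (c S * φ S (fun i : S => x i))
            ≤ Real.exp (c S * Real.log (F S x).toReal) :=
              Real.exp_le_exp.mpr (mul_le_mul_of_nonneg_left hle (hc S))
          _ = (F S x).toReal ^ c S := by rw [Real.rpow_def_of_pos htS, mul_comm]
      calc ENNReal.ofReal (Real.exp (f x))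
          ≤ ENNReal.ofReal (∏ S ∈ 𝒮, ((F S x).toReal) ^ c S) :=
            ENNReal.ofReal_le_ofReal hprod
        _ = ∏ S ∈ 𝒮, ENNReal.ofReal (((F S x).toReal) ^ c S) :=
            ENNReal.ofReal_prod_of_nonneg
              (fun S _ => Real.rpow_nonneg ENNReal.toReal_nonneg _)
        _ = ∏ S ∈ 𝒮, (F S x) ^ c S := by
            refine Finset.prod_congr rfl fun S hS => ?_
            rw [← ENNReal.ofReal_rpow_of_pos
              (ENNReal.toReal_pos (hxFpos S hS hg0) (hxFfin S hS).ne),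
              ENNReal.ofReal_toReal (hxFfin S hS).ne]
        _ = ∏ S : Finset (Fin n), (F S x) ^ c S := by
            refine Finset.prod_subset (Finset.subset_univ _) fun S _ hS => ?_
            have hcS : c S = 0 := by simpa [h𝒮] using hS
            rw [hcS, ENNReal.rpow_zero]
  have hFone : ∀ S : Finset (Fin n), ∫⁻ x, F S x ∂μ = 1 := by
    intro S
    have h7 : ∫⁻ x, F S x ∂μ
        = ∫⁻ y, (marginal P S).rnDeriv (marginal μ S) y ∂(marginal μ S) :=
      (lintegral_map (Measure.measurable_rnDeriv _ _) (hπ S)).symm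
    rw [h7, Measure.lintegral_rnDeriv (hacS S)]
    exact measure_univ
  have hFdep : ∀ (S : Finset (Fin n)) (x y : ∀ i, X i),
      (∀ i ∈ S, x i = y i) → F S x = F S y := by
    intro S x y h
    have : (fun i : S => x i) = (fun i : S => y i) := funext fun i => h i i.2
    simp only [hF, this]
  have hfinner := finner_inequality Q F hFm hFdep c hc hci
  have hbound : ∫⁻ y, P.rnDeriv μ y * ENNReal.ofReal (Real.exp (f y - llr P μ y)) ∂μ ≤ 1 := by
    calc ∫⁻ y, P.rnDeriv μ y * ENNReal.ofReal (Real.exp (f y - llr P μ y)) ∂μ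
        ≤ ∫⁻ x, ∏ S : Finset (Fin n), F S x ^ c S ∂μ := lintegral_mono_ae hbound1
      _ ≤ ∏ S : Finset (Fin n), (∫⁻ x, F S x ∂μ) ^ c S := hfinner
      _ = 1 := by simp [hFone]
  have hcore := aux_core hac hint hfm hfi hbound
  rw [hsumf] at hcore
  exact hcore

end Gibbs

/-- Two probability measures on a subsingleton space coincide. -/
lemma subsingleton_prob_eq {α : Type*} [MeasurableSpace α] [Subsingleton α]
    (μ ν : Measure α) [IsProbabilityMeasure μ] [IsProbabilityMeasure ν] : μ = ν := by
  ext s hs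
  rcases s.eq_empty_or_nonempty with rfl | ⟨a, ha⟩
  · simp
  · have hsu : s = Set.univ := Set.eq_univ_of_forall fun b => (Subsingleton.elim a b) ▸ ha
    rw [hsu]
    simp [measure_univ]

/-- Shearer's inequality for relative entropy with respect to a product measure. -/
theorem shearer_relative_entropy {n : ℕ} {X : Fin n → Type*}
    [∀ i, TopologicalSpace (X i)] [∀ i, PolishSpace (X i)]
    [∀ i, MeasurableSpace (X i)] [∀ i, BorelSpace (X i)]
    (Q : ∀ i, Measure (X i)) [∀ i, IsProbabilityMeasure (Q i)]
    (P : Measure (∀ i, X i)) [IsProbabilityMeasure P]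
    (c : Finset (Fin n) → ℝ) (hc : ∀ S, 0 ≤ c S)
    (hci : ∀ i : Fin n,
      ∑ S ∈ Finset.univ.filter (fun S : Finset (Fin n) => i ∈ S), c S ≤ 1) :
    ∑ S : Finset (Fin n), ENNReal.ofReal (c S) * KLdiv (marginal P S) (marginal (Measure.pi Q) S)
      ≤ KLdiv P (Measure.pi Q) := by
  classical
  by_cases h0 : P ≪ Measure.pi Q ∧ Integrable (llr P (Measure.pi Q)) P
  · obtain ⟨hac, hint⟩ := h0
    set μ := Measure.pi Q with hμdef
    have hπ : ∀ S : Finset (Fin n), Measurable (fun (x : ∀ i, X i) (i : S) => x i) :=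
      fun S => measurable_proj' S
    have hacS : ∀ S : Finset (Fin n), marginal P S ≪ marginal μ S :=
      fun S => hac.map (hπ S)
    set D := ∫ x, llr P μ x ∂P with hD
    -- integrability for the empty set
    have hempty : Integrable (llr (marginal P ∅) (marginal μ ∅)) (marginal P ∅) := by
      haveI : Subsingleton (∀ i : ((∅ : Finset (Fin n)) : Finset (Fin n)), X i) :=
        ⟨fun a b => funext fun i => absurd i.2 (Finset.notMem_empty _)⟩
      have hPQ : marginal P ∅ = marginal μ ∅ := subsingleton_prob_eq _ _
      rw [hPQ]
      have h00 : llr (marginal μ (∅ : Finset (Fin n))) (marginal μ ∅) =ᵐ[marginal μ ∅] 0 := by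
        filter_upwards [Measure.rnDeriv_self (marginal μ (∅ : Finset (Fin n)))] with y hy
        simp [llr, hy]
      exact (integrable_const (0 : ℝ)).congr h00.symm
    -- integrability for all S with c S ≠ 0
    have hint_S : ∀ S : Finset (Fin n), c S ≠ 0 →
        Integrable (llr (marginal P S) (marginal μ S)) (marginal P S) := by
      intro S hcS
      by_cases hSe : S = ∅
      · subst hSe; exact hempty
      · obtain ⟨i₀, hi₀⟩ := Finset.nonempty_iff_ne_empty.mpr hSe
        have hcS1 : c S ≤ 1 := by
          refine le_trans ?_ (hci i₀)
          refine Finset.single_le_sum (f := c) (fun T _ => hc T) ?_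
          simp [hi₀]
        set c' : Finset (Fin n) → ℝ := fun T => if T = S then c S else 0 with hc'
        have hc'0 : ∀ T, 0 ≤ c' T := fun T => by
          by_cases h : T = S <;> simp [hc', h, hc S]
        have hci' : ∀ i : Fin n,
            ∑ T ∈ Finset.univ.filter (fun T : Finset (Fin n) => i ∈ T), c' T ≤ 1 := by
          intro i
          rw [hc']
          rw [Finset.sum_ite_eq' (Finset.univ.filter (fun T : Finset (Fin n) => i ∈ T)) S
            (fun _ => c S)]
          split_ifs
          · exact hcS1
          · exact zero_le_one
        have hcpos : 0 < c S := lt_of_le_of_ne (hc S) (Ne.symm hcS)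
        apply aux_integrable_llr_of_bound (hacS S) (K := D / c S)
        intro M
        have hg := gibbs_bound Q P hac hint c' hc'0 hci'
          (fun T => fun y => min (llr (marginal P T) (marginal μ T) y) (M : ℝ))
          (fun T => (measurable_llr _ _).min measurable_const)
          (fun T hT => by
            have hTS : T = S := by
              by_contra h; simp [hc', h] at hT
            subst hTS
            exact aux_integrable_min (hacS T) _ (Nat.cast_nonneg M))
          (fun T hT y => min_le_left _ _)
        have hfilter : Finset.univ.filter (fun T : Finset (Fin n) => c' T ≠ 0) = {S} := by
          ext T
          simp only [Finset.mem_filter, Finset.mem_univ, true_and, Finset.mem_singleton, hc']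
          constructor
          · intro h; by_contra hTS; simp [hTS] at h
          · intro h; subst h; simpa using hcS
        rw [hfilter, Finset.sum_singleton] at hg
        simp only [hc', if_pos rfl] at hg
        rw [le_div_iff₀ hcpos, mul_comm]
        exact hg
    -- main inequality
    have hmain := gibbs_bound Q P hac hint c hc hci
      (fun S => llr (marginal P S) (marginal μ S))
      (fun S => measurable_llr _ _) (fun S h => hint_S S h) (fun S h y => le_rfl)
    have hnn : ∀ S : Finset (Fin n), c S ≠ 0 →
        0 ≤ ∫ y, llr (marginal P S) (marginal μ S) y ∂(marginal P S) :=
      fun S h => aux_integral_llr_nonneg (hacS S) (hint_S S h)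
    have hKL : KLdiv P μ = ENNReal.ofReal D := by
      simp only [KLdiv]
      rw [if_pos ⟨hac, hint⟩]
    have hterm : ∀ S : Finset (Fin n),
        ENNReal.ofReal (c S) * KLdiv (marginal P S) (marginal μ S)
          = ENNReal.ofReal (c S * ∫ y, llr (marginal P S) (marginal μ S) y ∂(marginal P S)) := by
      intro S
      by_cases h : c S = 0
      · simp [h]
      · have hKLS : KLdiv (marginal P S) (marginal μ S)
            = ENNReal.ofReal (∫ y, llr (marginal P S) (marginal μ S) y ∂(marginal P S)) := by
          simp only [KLdiv]
          rw [if_pos ⟨hacS S, hint_S S h⟩]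
        rw [hKLS, ← ENNReal.ofReal_mul (hc S)]
    calc ∑ S : Finset (Fin n), ENNReal.ofReal (c S) * KLdiv (marginal P S) (marginal μ S)
        = ∑ S : Finset (Fin n), ENNReal.ofReal
            (c S * ∫ y, llr (marginal P S) (marginal μ S) y ∂(marginal P S)) :=
          Finset.sum_congr rfl fun S _ => hterm S
      _ = ENNReal.ofReal (∑ S : Finset (Fin n),
            c S * ∫ y, llr (marginal P S) (marginal μ S) y ∂(marginal P S)) := by
          rw [ENNReal.ofReal_sum_of_nonneg]
          intro S _
          by_cases h : c S = 0
          · simp [h]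
          · exact mul_nonneg (hc S) (hnn S h)
      _ ≤ ENNReal.ofReal D := by
          refine ENNReal.ofReal_le_ofReal ?_
          refine le_trans (le_of_eq ?_) hmain
          refine (Finset.sum_filter_of_ne ?_).symm
          intro S _ hS
          intro hc0
          exact hS (by rw [hc0, zero_mul])
      _ = KLdiv P μ := hKL.symm
  · have hTop : KLdiv P (Measure.pi Q) = ⊤ := by
      simp only [KLdiv]
      rw [if_neg h0]
    rw [hTop]
    exact le_top
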